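/- Let λ, λ' : ℕ → ℝ be strictly monotone decreasing and let m, m' : ℕ → ℝ with m k > 0 and m' k > 0 for all k. Assume that for every t > 0 the families k ↦ m k · exp((λ k)·t) and k ↦ m' k · exp((λ' k)·t) are summable, and that ∑'_k m k · exp((λ k)·t) = ∑'_k m' k · exp((λ' k)·t) for every t > 0. Then λ = λ' and m = m'. -/
import Mathlib

open Filter Topology

set_option maxHeartbeats 1000000

private lemma stmt9_aux_tendsto (lam m : ℕ → ℝ) (hlam : StrictAnti lam)
    (hm : ∀ k, 0 < m k)
    (hsum : ∀ t > (0 : ℝ), Summable fun k => m k * Real.exp (lam k * t)) :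
    Tendsto (fun t => Real.exp (-(lam 0) * t) * ∑' k, m k * Real.exp (lam k * t))
      atTop (𝓝 (m 0)) := by
  have hsg : ∀ t > (0:ℝ), Summable fun k => m k * Real.exp ((lam k - lam 0) * t) := by
    intro t ht
    refine ((hsum t ht).mul_left (Real.exp (-(lam 0) * t))).congr fun k => ?_
    rw [mul_comm (Real.exp (-(lam 0) * t)), mul_assoc, ← Real.exp_add]
    ring_nf
  have h1 : ∀ t > (0:ℝ),
      Real.exp (-(lam 0) * t) * ∑' k, m k * Real.exp (lam k * t)
        = m 0 + ∑' k, m (k+1) * Real.exp ((lam (k+1) - lam 0) * t) := by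
    intro t ht
    rw [← tsum_mul_left]
    have he : (fun k => Real.exp (-(lam 0)*t) * (m k * Real.exp (lam k * t)))
        = fun k => m k * Real.exp ((lam k - lam 0)*t) := by
      funext k
      rw [mul_comm (Real.exp (-(lam 0) * t)), mul_assoc, ← Real.exp_add]
      ring_nf
    rw [he, Summable.tsum_eq_zero_add (hsg t ht)]
    simp
  -- tail tends to 0
  have hδ : lam 1 - lam 0 < 0 := sub_neg.2 (hlam one_pos)
  set T : ℝ → ℝ := fun t => ∑' k, m (k+1) * Real.exp ((lam (k+1) - lam 0) * t) with hT
  have hsg1 : Summable fun k => m (k+1) * Real.exp ((lam (k+1) - lam 0) * 1) :=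
    (summable_nat_add_iff 1).2 (hsg 1 one_pos)
  have hTbound : ∀ t ≥ (1:ℝ), T t ≤ Real.exp ((lam 1 - lam 0) * (t - 1)) * T 1 := by
    intro t ht
    have hsgt : Summable fun k => m (k+1) * Real.exp ((lam (k+1) - lam 0) * t) :=
      (summable_nat_add_iff 1).2 (hsg t (by linarith))
    have hterm : ∀ k, m (k+1) * Real.exp ((lam (k+1) - lam 0) * t)
        ≤ Real.exp ((lam 1 - lam 0) * (t - 1)) * (m (k+1) * Real.exp ((lam (k+1) - lam 0) * 1)) := by
      intro k
      have h2 : lam (k+1) ≤ lam 1 := hlam.antitone (by omega)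
      have h3 : (lam (k+1) - lam 0) * t = (lam (k+1) - lam 0) * (t-1) + (lam (k+1) - lam 0) * 1 := by
        ring
      rw [h3, Real.exp_add, ← mul_assoc, mul_comm (m (k+1)), mul_assoc]
      refine mul_le_mul_of_nonneg_right (Real.exp_le_exp.2 ?_)
        (mul_nonneg (hm _).le (Real.exp_pos _).le)
      exact mul_le_mul_of_nonneg_right (by linarith) (by linarith)
    calc T t ≤ ∑' k, Real.exp ((lam 1 - lam 0) * (t - 1)) * (m (k+1) * Real.exp ((lam (k+1) - lam 0) * 1)) :=
          Summable.tsum_le_tsum hterm hsgt (hsg1.mul_left _)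
      _ = Real.exp ((lam 1 - lam 0) * (t - 1)) * T 1 := tsum_mul_left
  have hg0 : Tendsto (fun t => Real.exp ((lam 1 - lam 0) * (t - 1)) * T 1) atTop (𝓝 0) := by
    have h4 : Tendsto (fun t : ℝ => (lam 1 - lam 0) * (t - 1)) atTop atBot :=
      (tendsto_atTop_add_const_right atTop (-1) tendsto_id).const_mul_atTop_of_neg hδ
    have := (Real.tendsto_exp_atBot.comp h4).mul_const (T 1)
    simpa using this
  have hTnonneg : ∀ t, 0 ≤ T t :=
    fun t => tsum_nonneg fun k => mul_nonneg (hm _).le (Real.exp_pos _).le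
  have hT0 : Tendsto T atTop (𝓝 0) :=
    squeeze_zero' (Eventually.of_forall hTnonneg)
      ((eventually_ge_atTop (1:ℝ)).mono hTbound) hg0
  have : Tendsto (fun t => m 0 + T t) atTop (𝓝 (m 0 + 0)) := tendsto_const_nhds.add hT0
  rw [add_zero] at this
  exact this.congr' (((eventually_gt_atTop (0:ℝ)).mono fun t ht => (h1 t ht).symm))

private lemma stmt9_head_le (lam lam' m m' : ℕ → ℝ)
    (hlam : StrictAnti lam) (hlam' : StrictAnti lam')
    (hm : ∀ k, 0 < m k) (hm' : ∀ k, 0 < m' k)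
    (hsum : ∀ t > (0 : ℝ), Summable fun k => m k * Real.exp (lam k * t))
    (hsum' : ∀ t > (0 : ℝ), Summable fun k => m' k * Real.exp (lam' k * t))
    (heq : ∀ t > (0 : ℝ),
      ∑' k, m k * Real.exp (lam k * t) = ∑' k, m' k * Real.exp (lam' k * t)) :
    lam' 0 ≤ lam 0 := by
  by_contra hc
  push_neg at hc
  have hA := stmt9_aux_tendsto lam m hlam hm hsum
  have hA' : Tendsto (fun t => Real.exp (-(lam 0) * t) * ∑' k, m' k * Real.exp (lam' k * t))
      atTop (𝓝 (m 0)) :=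
    hA.congr' (((eventually_gt_atTop (0:ℝ)).mono fun t ht => by rw [heq t ht]))
  have hlow : ∀ t > (0:ℝ), m' 0 * Real.exp ((lam' 0 - lam 0) * t)
      ≤ Real.exp (-(lam 0) * t) * ∑' k, m' k * Real.exp (lam' k * t) := by
    intro t ht
    have h5 : m' 0 * Real.exp (lam' 0 * t) ≤ ∑' k, m' k * Real.exp (lam' k * t) :=
      Summable.le_tsum (hsum' t ht) 0 fun i _ => mul_nonneg (hm' _).le (Real.exp_pos _).le
    have := mul_le_mul_of_nonneg_left h5 (Real.exp_pos (-(lam 0) * t)).le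
    calc m' 0 * Real.exp ((lam' 0 - lam 0) * t)
        = Real.exp (-(lam 0)*t) * (m' 0 * Real.exp (lam' 0 * t)) := by
          rw [mul_comm (Real.exp (-(lam 0) * t)), mul_assoc, ← Real.exp_add]; ring_nf
      _ ≤ _ := this
  have hbig : Tendsto (fun t => m' 0 * Real.exp ((lam' 0 - lam 0) * t)) atTop atTop := by
    refine Tendsto.const_mul_atTop (hm' 0) ?_
    exact Real.tendsto_exp_atTop.comp (tendsto_id.const_mul_atTop (by linarith))
  have : Tendsto (fun t => Real.exp (-(lam 0) * t) * ∑' k, m' k * Real.exp (lam' k * t))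
      atTop atTop :=
    tendsto_atTop_mono' _ (((eventually_gt_atTop (0:ℝ)).mono hlow)) hbig
  exact not_tendsto_atTop_of_tendsto_nhds hA' this

private lemma stmt9_head_eq (lam lam' m m' : ℕ → ℝ)
    (hlam : StrictAnti lam) (hlam' : StrictAnti lam')
    (hm : ∀ k, 0 < m k) (hm' : ∀ k, 0 < m' k)
    (hsum : ∀ t > (0 : ℝ), Summable fun k => m k * Real.exp (lam k * t))
    (hsum' : ∀ t > (0 : ℝ), Summable fun k => m' k * Real.exp (lam' k * t))
    (heq : ∀ t > (0 : ℝ),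
      ∑' k, m k * Real.exp (lam k * t) = ∑' k, m' k * Real.exp (lam' k * t)) :
    lam 0 = lam' 0 ∧ m 0 = m' 0 := by
  have h1 : lam' 0 ≤ lam 0 :=
    stmt9_head_le lam lam' m m' hlam hlam' hm hm' hsum hsum' heq
  have h2 : lam 0 ≤ lam' 0 :=
    stmt9_head_le lam' lam m' m hlam' hlam hm' hm hsum' hsum fun t ht => (heq t ht).symm
  have hl : lam 0 = lam' 0 := le_antisymm h2 h1
  refine ⟨hl, ?_⟩
  have hA := stmt9_aux_tendsto lam m hlam hm hsum
  have hA' := stmt9_aux_tendsto lam' m' hlam' hm' hsum'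
  rw [← hl] at hA'
  have hA'' : Tendsto (fun t => Real.exp (-(lam 0) * t) * ∑' k, m' k * Real.exp (lam' k * t))
      atTop (𝓝 (m 0)) :=
    hA.congr' (((eventually_gt_atTop (0:ℝ)).mono fun t ht => by rw [heq t ht]))
  exact tendsto_nhds_unique hA'' hA'

theorem stmt_9 (lam lam' m m' : ℕ → ℝ)
    (hlam : StrictAnti lam) (hlam' : StrictAnti lam')
    (hm : ∀ k, 0 < m k) (hm' : ∀ k, 0 < m' k)
    (hsum : ∀ t > (0 : ℝ), Summable fun k => m k * Real.exp (lam k * t))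
    (hsum' : ∀ t > (0 : ℝ), Summable fun k => m' k * Real.exp (lam' k * t))
    (heq : ∀ t > (0 : ℝ),
      ∑' k, m k * Real.exp (lam k * t) = ∑' k, m' k * Real.exp (lam' k * t)) :
    lam = lam' ∧ m = m' := by
  have key : ∀ n, lam n = lam' n ∧ m n = m' n := by
    intro n
    induction n using Nat.strong_induction_on with
    | _ n ih =>
      have hsumn : ∀ t > (0:ℝ), Summable fun k => m (k + n) * Real.exp (lam (k + n) * t) :=
        fun t ht => (summable_nat_add_iff n).2 (hsum t ht)
      have hsumn' : ∀ t > (0:ℝ), Summable fun k => m' (k + n) * Real.exp (lam' (k + n) * t) :=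
        fun t ht => (summable_nat_add_iff n).2 (hsum' t ht)
      have heqn : ∀ t > (0:ℝ),
          ∑' k, m (k + n) * Real.exp (lam (k + n) * t)
            = ∑' k, m' (k + n) * Real.exp (lam' (k + n) * t) := by
        intro t ht
        have e1 := Summable.sum_add_tsum_nat_add n (hsum t ht)
        have e2 := Summable.sum_add_tsum_nat_add n (hsum' t ht)
        have e3 : ∑ i ∈ Finset.range n, m i * Real.exp (lam i * t)
            = ∑ i ∈ Finset.range n, m' i * Real.exp (lam' i * t) := by
          refine Finset.sum_congr rfl fun i hi => ?_
          obtain ⟨hli, hmi⟩ := ih i (Finset.mem_range.1 hi)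
          rw [hli, hmi]
        have := heq t ht
        rw [← e1, ← e2, e3] at this
        linarith
      have := stmt9_head_eq (fun k => lam (k + n)) (fun k => lam' (k + n))
        (fun k => m (k + n)) (fun k => m' (k + n))
        (fun a b hab => hlam (by omega)) (fun a b hab => hlam' (by omega))
        (fun k => hm _) (fun k => hm' _) hsumn hsumn' heqn
      simpa using this
  exact ⟨funext fun n => (key n).1, funext fun n => (key n).2⟩
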